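/- arXiv:math/0512556 — 4 statements merged into one kernel-verified Lean document; each statement's English description precedes it below -/
import Mathlib

section
/- Let k be a field, E a finite-dimensional k-vector space, and σ a nondegenerate alternating bilinear form on E. Let V, W ⊆ E be Lagrangian subspaces, i.e. V = V^⊥ and W = W^⊥, where for a subspace U, U^⊥ = {x ∈ E : σ(x,u) = 0 for all u ∈ U}. Then the sequence 0 → V ∩ W → E → V* ⊕ W* → (V ∩ W)* → 0 is exact, where: the first map is the inclusion of V ∩ W into E; the second map sends x ∈ E to the pair of functionals (σ(x,·)|_V, σ(x,·)|_W); and the third map sends a pair (φ, ψ) ∈ V* ⊕ W* to the functional (φ − ψ)|_{V∩W} on V ∩ W obtained by restricting φ and ψ to V ∩ W and taking the difference. -/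
/-- Let `(E, σ)` be a finite-dimensional symplectic vector space over a field `k`
(`σ` a nondegenerate alternating bilinear form) and let `V`, `W` be Lagrangian subspaces
(`V = V^⊥`, `W = W^⊥`). Then the sequence
`0 → V ∩ W → E → V* ⊕ W* → (V ∩ W)* → 0`
is exact, where the second map is `x ↦ (σ(x,·)|_V, σ(x,·)|_W)` and the third map is
`(φ, ψ) ↦ (φ − ψ)|_{V∩W}`. -/
theorem stmt_3 (k : Type*) [Field k] (E : Type*) [AddCommGroup E] [Module k E]
    [FiniteDimensional k E]
    (σ : E →ₗ[k] E →ₗ[k] k)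
    (halt : ∀ x : E, σ x x = 0)
    (hnondeg : ∀ x : E, (∀ y : E, σ x y = 0) → x = 0)
    (V W : Submodule k E)
    (hV : ∀ x : E, x ∈ V ↔ ∀ v ∈ V, σ x v = 0)
    (hW : ∀ x : E, x ∈ W ↔ ∀ w ∈ W, σ x w = 0) :
    Function.Injective ((V ⊓ W).subtype) ∧
    LinearMap.range ((V ⊓ W).subtype)
      = LinearMap.ker
        (LinearMap.prod (V.subtype.dualMap ∘ₗ σ) (W.subtype.dualMap ∘ₗ σ)) ∧
    LinearMap.range
        (LinearMap.prod (V.subtype.dualMap ∘ₗ σ) (W.subtype.dualMap ∘ₗ σ))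
      = LinearMap.ker
        ((Submodule.inclusion (inf_le_left : V ⊓ W ≤ V)).dualMap ∘ₗ
            LinearMap.fst k (Module.Dual k V) (Module.Dual k W)
          - (Submodule.inclusion (inf_le_right : V ⊓ W ≤ W)).dualMap ∘ₗ
            LinearMap.snd k (Module.Dual k V) (Module.Dual k W)) ∧
    Function.Surjective
        ((Submodule.inclusion (inf_le_left : V ⊓ W ≤ V)).dualMap ∘ₗ
            LinearMap.fst k (Module.Dual k V) (Module.Dual k W)
          - (Submodule.inclusion (inf_le_right : V ⊓ W ≤ W)).dualMap ∘ₗ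
            LinearMap.snd k (Module.Dual k V) (Module.Dual k W)) := by
  classical
  -- σ as a map to the dual is bijective
  have hσinj : Function.Injective σ := by
    rw [← LinearMap.ker_eq_bot]
    exact (Submodule.eq_bot_iff _).mpr fun x hx =>
      hnondeg x fun y => congrFun (congrArg DFunLike.coe hx) y
  -- kernels of the restriction maps
  have hkerU : ∀ (U : Submodule k E), (∀ x : E, x ∈ U ↔ ∀ u ∈ U, σ x u = 0) →
      LinearMap.ker (U.subtype.dualMap ∘ₗ σ) = U := by
    intro U hU
    ext x
    rw [LinearMap.mem_ker, hU x]
    constructor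
    · intro hx u hu
      exact congrFun (congrArg DFunLike.coe hx) ⟨u, hu⟩
    · intro hx
      ext ⟨u, hu⟩
      exact hx u hu
  have hkerV : LinearMap.ker (V.subtype.dualMap ∘ₗ σ) = V := hkerU V hV
  have hkerW : LinearMap.ker (W.subtype.dualMap ∘ₗ σ) = W := hkerU W hW
  -- surjectivity of the restriction maps
  have hsurjU : ∀ (U : Submodule k E),
      Function.Surjective (U.subtype.dualMap ∘ₗ σ) := by
    intro U
    have h1 : Function.Surjective (σ : E →ₗ[k] Module.Dual k E) := by
      apply (LinearMap.injective_iff_surjective_of_finrank_eq_finrank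
        Subspace.dual_finrank_eq.symm).mp hσinj
    exact (LinearMap.dualMap_surjective_of_injective U.injective_subtype).comp h1
  -- dimension relations: finrank E = 2 finrank V = 2 finrank W
  have hdim : ∀ (U : Submodule k E), LinearMap.ker (U.subtype.dualMap ∘ₗ σ) = U →
      Module.finrank k E = Module.finrank k U + Module.finrank k U := by
    intro U hker
    have := LinearMap.finrank_range_add_finrank_ker (U.subtype.dualMap ∘ₗ σ)
    rw [hker, LinearMap.range_eq_top.mpr (hsurjU U), finrank_top,
      Subspace.dual_finrank_eq] at this
    omega
  have hdimV := hdim V hkerV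
  have hdimW := hdim W hkerW
  refine ⟨Submodule.injective_subtype _, ?_, ?_, ?_⟩
  · rw [Submodule.range_subtype, LinearMap.ker_prod, hkerV, hkerW]
  · -- middle exactness
    set P := LinearMap.prod (V.subtype.dualMap ∘ₗ σ) (W.subtype.dualMap ∘ₗ σ) with hP
    set D := ((Submodule.inclusion (inf_le_left : V ⊓ W ≤ V)).dualMap ∘ₗ
            LinearMap.fst k (Module.Dual k V) (Module.Dual k W)
          - (Submodule.inclusion (inf_le_right : V ⊓ W ≤ W)).dualMap ∘ₗ
            LinearMap.snd k (Module.Dual k V) (Module.Dual k W)) with hD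
    have hle : LinearMap.range P ≤ LinearMap.ker D := by
      rintro _ ⟨x, rfl⟩
      rw [LinearMap.mem_ker]
      ext ⟨u, hu⟩
      simp [hD, hP, LinearMap.dualMap_apply, Submodule.inclusion]
    have hDsurj : Function.Surjective D := by
      intro χ
      obtain ⟨φ, hφ⟩ := LinearMap.dualMap_surjective_of_injective
        (Submodule.inclusion_injective (inf_le_left : V ⊓ W ≤ V)) χ
      exact ⟨(φ, 0), by simp [hD, hφ]⟩
    have h1 : Module.finrank k (LinearMap.range P)
        = Module.finrank k (LinearMap.ker D) := by
      have e1 := LinearMap.finrank_range_add_finrank_ker P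
      have e2 := LinearMap.finrank_range_add_finrank_ker D
      rw [LinearMap.range_eq_top.mpr hDsurj, finrank_top,
        Subspace.dual_finrank_eq] at e2
      have kp : LinearMap.ker P = V ⊓ W := by
        rw [hP, LinearMap.ker_prod, hkerV, hkerW]
      rw [kp] at e1
      have e3 : Module.finrank k (Module.Dual k V × Module.Dual k W)
          = Module.finrank k V + Module.finrank k W := by
        rw [Module.finrank_prod, Subspace.dual_finrank_eq, Subspace.dual_finrank_eq]
      rw [e3] at e2
      omega
    exact Submodule.eq_of_le_of_finrank_eq hle h1
  · intro χ
    obtain ⟨φ, hφ⟩ := LinearMap.dualMap_surjective_of_injective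
      (Submodule.inclusion_injective (inf_le_left : V ⊓ W ≤ V)) χ
    exact ⟨(φ, 0), by simp [hφ]⟩
end

section
/- Let I ⊆ ℂ[X,Y,Z] be an ideal whose radical equals the maximal ideal (X,Y,Z) (so the subscheme it defines is supported at the origin). Suppose I is invariant under the torus T₀: for every (t₁,t₂,t₃) ∈ (ℂ*)³ with t₁t₂t₃ = 1, the ℂ-algebra automorphism of ℂ[X,Y,Z] determined by X ↦ t₁X, Y ↦ t₂Y, Z ↦ t₃Z maps I into I. Then I is a monomial ideal: for every f ∈ I, every monomial appearing in f with nonzero coefficient lies in I; equivalently, I is generated by the monomials it contains. -/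
open MvPolynomial Finset

abbrev R3 := MvPolynomial (Fin 3) ℂ

-- ===== Vandermonde separation =====
lemma vdm_aux {V : Type*} [AddCommMonoid V] [Module ℂ V] (S : Submodule ℂ V) (n : ℕ)
    (x : Fin n → ℂ) (hx : Function.Injective x) (v : Fin n → V)
    (h : ∀ j : Fin n, (∑ k : Fin n, x j ^ (k : ℕ) • v k) ∈ S) :
    ∀ k, v k ∈ S := by
  intro k
  set A : Matrix (Fin n) (Fin n) ℂ := Matrix.vandermonde x with hA
  have hdet : A.det ≠ 0 := by
    rw [hA, Matrix.det_vandermonde]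
    refine Finset.prod_ne_zero_iff.2 fun i _ => Finset.prod_ne_zero_iff.2 fun j hj => ?_
    have hij : i ≠ j := fun e => by simp [e] at hj
    exact sub_ne_zero.2 fun e => hij (hx e).symm
  have hBA : A⁻¹ * A = 1 := Matrix.nonsing_inv_mul A (isUnit_iff_ne_zero.2 hdet)
  have key : v k = ∑ j : Fin n, A⁻¹ k j • (∑ l : Fin n, x j ^ (l : ℕ) • v l) := by
    have he : ∀ (j : Fin n) (l : Fin n), x j ^ (l : ℕ) = A j l := fun _ _ => rfl
    simp_rw [he, Finset.smul_sum, smul_smul]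
    rw [Finset.sum_comm]
    have h1 : ∀ l : Fin n, ∑ j : Fin n, (A⁻¹ k j * A j l) = (1 : Matrix (Fin n) (Fin n) ℂ) k l := by
      intro l; rw [← hBA]; rfl
    simp_rw [← Finset.sum_smul, h1, Matrix.one_apply]
    rw [Finset.sum_eq_single k]
    · simp
    · intro b _ hb; simp [Ne.symm hb]
    · simp
  rw [key]
  exact Submodule.sum_mem S fun j _ => Submodule.smul_mem S _ (h j)

-- ===== within a weight class =====
lemma min_lemma (I : Ideal R3) (m p : R3) (c : ℕ → ℂ) (r N k0 : ℕ)
    (hbig : ∀ k, N ≤ k → m * p ^ k ∈ I)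
    (h0 : ∀ k, k < k0 → c k = 0) (hk0 : c k0 ≠ 0) (hk0r : k0 < r)
    (hg : (∑ k ∈ range r, C (c k) * (m * p ^ k)) ∈ I) :
    m * p ^ k0 ∈ I := by
  have claim : ∀ i : ℕ, ∀ j : ℕ, k0 ≤ j → N ≤ j + i → m * p ^ j ∈ I := by
    intro i
    induction i with
    | zero => intro j _ hN; exact hbig j (by omega)
    | succ i ih =>
      intro j hk0j hN
      by_cases hc : N ≤ j + i
      · exact ih j hk0j hc
      · have hup : ∀ k, j + 1 ≤ k → m * p ^ k ∈ I := fun k hk => ih k (by omega) (by omega)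
        have hshift : (p ^ (j - k0)) * (∑ k ∈ range r, C (c k) * (m * p ^ k)) ∈ I :=
          I.mul_mem_left _ hg
        have heq : (p ^ (j - k0)) * (∑ k ∈ range r, C (c k) * (m * p ^ k))
            = C (c k0) * (m * p ^ j)
              + ∑ k ∈ (range r).erase k0, C (c k) * (m * p ^ (k + (j - k0))) := by
          rw [Finset.mul_sum, ← Finset.add_sum_erase _ _ (Finset.mem_range.2 hk0r)]
          have hj : p ^ (j - k0) * p ^ k0 = p ^ j := by rw [← pow_add]; congr 1; omega
          congr 1
          · rw [← hj]; ring
          · exact Finset.sum_congr rfl fun k _ => by rw [pow_add]; ring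
        have hrest : (∑ k ∈ (range r).erase k0, C (c k) * (m * p ^ (k + (j - k0)))) ∈ I := by
          refine Ideal.sum_mem I fun k hk => ?_
          rcases lt_or_ge k k0 with h | h
          · rw [h0 k h]; simp
          · have hkk0 : k0 < k := lt_of_le_of_ne h (fun e => (Finset.mem_erase.1 hk).1 e.symm)
            exact I.mul_mem_left _ (hup _ (by omega))
        have hmain : C (c k0) * (m * p ^ j) ∈ I := by
          have := I.sub_mem hshift hrest
          rwa [heq, add_sub_cancel_right] at this
        have : C (c k0)⁻¹ * (C (c k0) * (m * p ^ j)) ∈ I := I.mul_mem_left _ hmain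
        rwa [← mul_assoc, ← C_mul, inv_mul_cancel₀ hk0, C_1, one_mul] at this
  exact claim N k0 le_rfl (by omega)

lemma low_lemma (I : Ideal R3) (m p : R3) (c : ℕ → ℂ) (r N : ℕ)
    (hbig : ∀ k, N ≤ k → m * p ^ k ∈ I)
    (hr : ∀ k, r ≤ k → c k = 0)
    (hg : (∑ k ∈ range r, C (c k) * (m * p ^ k)) ∈ I) :
    ∀ k, c k ≠ 0 → m * p ^ k ∈ I := by
  intro k0
  induction k0 using Nat.strong_induction_on with
  | _ k0 ih =>
    intro hk0
    have hk0r : k0 < r := by by_contra h; exact hk0 (hr k0 (by omega))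
    set c' : ℕ → ℂ := fun k => if k < k0 then 0 else c k with hc'
    have hg' : (∑ k ∈ range r, C (c' k) * (m * p ^ k)) ∈ I := by
      have hsub : (∑ k ∈ range r, (C (c k) * (m * p ^ k) - C (c' k) * (m * p ^ k))) ∈ I := by
        refine Ideal.sum_mem I fun k _ => ?_
        by_cases hkk : k < k0
        · simp only [hc', if_pos hkk, map_zero, zero_mul, sub_zero]
          by_cases hck : c k = 0
          · rw [hck]; simp
          · exact I.mul_mem_left _ (ih k hkk hck)
        · simp only [hc', if_neg hkk, sub_self]; exact I.zero_mem
      have hmem := I.sub_mem hg hsub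
      have h2 : (∑ k ∈ range r, C (c' k) * (m * p ^ k))
          = (∑ k ∈ range r, C (c k) * (m * p ^ k))
            - ∑ k ∈ range r, (C (c k) * (m * p ^ k) - C (c' k) * (m * p ^ k)) := by
        rw [← Finset.sum_sub_distrib]
        exact Finset.sum_congr rfl fun x _ => by ring
      rw [h2]; exact hmem
    exact min_lemma I m p c' r N k0 hbig
      (fun k hk => by simp [hc', if_pos hk]) (by simp [hc', hk0]) hk0r hg'

-- ===== high degree monomials =====
lemma high_lemma (I : Ideal R3) (hI : I.radical = Ideal.span {X 0, X 1, X 2}) :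
    ∃ N : ℕ, ∀ d : Fin 3 →₀ ℕ, N ≤ d 0 + d 1 + d 2 → monomial d (1 : ℂ) ∈ I := by
  have hXmem : ∀ i : Fin 3, (X i : R3) ∈ I.radical := by
    intro i
    rw [hI]
    fin_cases i
    · exact Ideal.subset_span (by simp)
    · exact Ideal.subset_span (by simp)
    · exact Ideal.subset_span (by simp)
  choose nn hnn using fun i : Fin 3 => Ideal.mem_radical_iff.1 (hXmem i)
  refine ⟨nn 0 + nn 1 + nn 2 + 1, fun d hd => ?_⟩
  have hex : ∃ i : Fin 3, nn i ≤ d i := by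
    by_contra h
    push_neg at h
    have h0 := h 0; have h1 := h 1; have h2 := h 2
    omega
  obtain ⟨i, hi⟩ := hex
  have hsplit : d = Finsupp.single i (nn i) + (d - Finsupp.single i (nn i)) := by
    ext j
    by_cases hj : j = i
    · subst hj; simp [Finsupp.single_apply, Finsupp.tsub_apply]; omega
    · simp [Finsupp.single_apply, Finsupp.tsub_apply, Ne.symm hj]
  have heq : monomial d (1:ℂ) = X i ^ (nn i) * monomial (d - Finsupp.single i (nn i)) 1 := by
    rw [X_pow_eq_monomial, monomial_mul, one_mul, ← hsplit]
  rw [heq]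
  exact I.mul_mem_right _ (hnn i)

-- ===== torus action formula =====
lemma act_lemma (t : Fin 3 → ℂ) (f : R3) :
    aeval (fun i : Fin 3 => C (t i) * X i) f
      = ∑ d ∈ f.support, ((∏ i : Fin 3, t i ^ d i) • monomial d (coeff d f)) := by
  conv_lhs => rw [f.as_sum]
  rw [map_sum]
  refine Finset.sum_congr rfl fun d _ => ?_
  rw [aeval_monomial, smul_monomial, smul_eq_mul,
    Finsupp.prod_fintype _ _ (fun i => pow_zero _)]
  have h : ∏ i : Fin 3, (C (t i) * X i) ^ d i
      = C (∏ i : Fin 3, t i ^ d i) * ∏ i : Fin 3, (X i : R3) ^ d i := by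
    rw [map_prod, ← Finset.prod_mul_distrib]
    exact Finset.prod_congr rfl fun i _ => by rw [mul_pow, ← C_pow]
  rw [h, monomial_eq, Finsupp.prod_fintype _ _ (fun i => pow_zero _)]
  push_cast [algebraMap_eq]
  rw [C_mul]
  ring

-- ===== combinatorics of the (1,1,1)-direction =====
noncomputable def triple3 : Fin 3 →₀ ℕ := Finsupp.single 0 1 + Finsupp.single 1 1 + Finsupp.single 2 1

lemma triple3_apply (i : Fin 3) : triple3 i = 1 := by
  fin_cases i <;> simp [triple3, Finsupp.single_apply]

def wt3 (M : ℕ) (d' : Fin 3 →₀ ℕ) : ℤ :=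
  (d' 0 : ℤ) + (M : ℤ) * (d' 1 : ℤ) - (1 + (M : ℤ)) * (d' 2 : ℤ)

lemma wt3_add_triple (M : ℕ) (b : Fin 3 →₀ ℕ) (k : ℕ) :
    wt3 M (b + k • triple3) = wt3 M b := by
  simp only [wt3, Finsupp.add_apply, Finsupp.smul_apply, triple3_apply, smul_eq_mul, mul_one]
  push_cast
  ring

lemma X012_eq : (X 0 * X 1 * X 2 : R3) = monomial triple3 1 := by
  have h : ∀ i : Fin 3, (X i : R3) = monomial (Finsupp.single i 1) 1 := fun i => rfl
  rw [h 0, h 1, h 2, monomial_mul, monomial_mul, triple3]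
  norm_num

lemma mono_btk (b : Fin 3 →₀ ℕ) (k : ℕ) (c : ℂ) :
    monomial (b + k • triple3) c = C c * (monomial b 1 * (X 0 * X 1 * X 2 : R3) ^ k) := by
  rw [X012_eq, monomial_pow, one_pow, monomial_mul, one_mul, C_mul_monomial, mul_one]

lemma prod_pow_eq (u : ℂˣ) (M : ℕ) (d' : Fin 3 →₀ ℕ) :
    (∏ i : Fin 3, (((u ^ (![1, (M:ℤ), -(1+(M:ℤ))] i) : ℂˣ) : ℂ)) ^ (d' i))
      = ((u ^ (wt3 M d') : ℂˣ) : ℂ) := by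
  rw [Fin.prod_univ_three]
  simp only [Matrix.cons_val_zero, Matrix.cons_val_one, Matrix.head_cons,
    Matrix.cons_val_two, Matrix.tail_cons]
  rw [← Units.val_pow_eq_pow_val, ← Units.val_pow_eq_pow_val, ← Units.val_pow_eq_pow_val,
    ← Units.val_mul, ← Units.val_mul]
  congr 1
  rw [← zpow_natCast (u ^ (1:ℤ)), ← zpow_natCast (u ^ ((M:ℤ))), ← zpow_natCast (u ^ (-(1+(M:ℤ)))),
    ← zpow_mul, ← zpow_mul, ← zpow_mul, ← zpow_add, ← zpow_add]
  congr 1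
  simp only [wt3]
  ring

set_option maxHeartbeats 2000000 in
theorem stmt_8 (I : Ideal (MvPolynomial (Fin 3) ℂ))
    (hI : I.radical = Ideal.span {X 0, X 1, X 2})
    (hinv : ∀ t : Fin 3 → ℂ, (∀ i, t i ≠ 0) → t 0 * t 1 * t 2 = 1 →
      ∀ f ∈ I, aeval (fun i : Fin 3 => C (t i) * X i) f ∈ I) :
    ∀ f ∈ I, ∀ d ∈ f.support, (monomial d (1 : ℂ)) ∈ I := by
  intro f hf d hd
  classical
  obtain ⟨S, hS⟩ : ∃ S : ℕ, ∀ d' ∈ f.support, d' 0 + d' 1 + d' 2 ≤ S :=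
    ⟨∑ d' ∈ f.support, (d' 0 + d' 1 + d' 2),
      fun d' h => Finset.single_le_sum (f := fun d' => d' 0 + d' 1 + d' 2)
        (fun _ _ => Nat.zero_le _) h⟩
  obtain ⟨M, hMdef⟩ : ∃ M : ℕ, M = 2 * S + 1 := ⟨_, rfl⟩
  -- separation of weight classes
  have hsep : ∀ d' ∈ f.support, wt3 M d' = wt3 M d →
      ((d' 0 : ℤ) - d' 2 = (d 0 : ℤ) - d 2 ∧ (d' 1 : ℤ) - d' 2 = (d 1 : ℤ) - d 2) := by
    intro d' hd' hw
    have h1 := hS d' hd'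
    have h2 := hS d hd
    simp only [wt3] at hw
    set a : ℤ := ((d' 0 : ℤ) - d' 2) - ((d 0 : ℤ) - d 2) with ha
    set b : ℤ := ((d' 1 : ℤ) - d' 2) - ((d 1 : ℤ) - d 2) with hb
    have hab : a + (M:ℤ) * b = 0 := by rw [ha, hb]; linear_combination hw
    have hMZ : (M:ℤ) = 2*(S:ℤ) + 1 := by rw [hMdef]; push_cast; ring
    clear hw hMdef
    have haM : -(M:ℤ) < a ∧ a < (M:ℤ) := by
      constructor <;> (rw [ha]; omega)
    have hb0 : b = 0 := by
      rcases lt_trichotomy b 0 with h|h|h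
      · nlinarith [haM.1, haM.2]
      · exact h
      · nlinarith [haM.1, haM.2]
    have ha0 : a = 0 := by rw [hb0, mul_zero, add_zero] at hab; exact hab
    rw [ha] at ha0; rw [hb] at hb0
    constructor <;> omega
  obtain ⟨t0, ht0def⟩ : ∃ t0 : ℕ, t0 = min (d 0) (min (d 1) (d 2)) := ⟨_, rfl⟩
  have ht0 : t0 ≤ d 0 ∧ t0 ≤ d 1 ∧ t0 ≤ d 2 ∧ (t0 = d 0 ∨ t0 = d 1 ∨ t0 = d 2) := by
    rw [ht0def]; omega
  set b : Fin 3 →₀ ℕ := d - t0 • triple3 with hbdef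
  have hb_apply : ∀ i, b i = d i - t0 := by
    intro i
    rw [hbdef, Finsupp.tsub_apply, Finsupp.smul_apply, triple3_apply, smul_eq_mul, mul_one]
  have hbd : b + t0 • triple3 = d := by
    ext i
    rw [Finsupp.add_apply, Finsupp.smul_apply, triple3_apply, hb_apply, smul_eq_mul, mul_one]
    have : i = 0 ∨ i = 1 ∨ i = 2 := by fin_cases i <;> simp
    rcases this with h|h|h <;> subst h <;> omega
  have hwtb : ∀ k : ℕ, wt3 M (b + k • triple3) = wt3 M d := by
    intro k; rw [wt3_add_triple, ← hbd, wt3_add_triple]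
  have hclass : ∀ d' ∈ f.support, wt3 M d' = wt3 M d →
      d' = b + (d' 2 + t0 - d 2) • triple3 := by
    intro d' hd' hw
    obtain ⟨e1, e2⟩ := hsep d' hd' hw
    ext i
    rw [Finsupp.add_apply, Finsupp.smul_apply, triple3_apply, hb_apply, smul_eq_mul, mul_one]
    have : i = 0 ∨ i = 1 ∨ i = 2 := by fin_cases i <;> simp
    rcases this with h|h|h <;> subst h <;> omega
  obtain ⟨N, hN⟩ := high_lemma I hI
  obtain ⟨P, hPdef⟩ : ∃ P : ℕ, P = (M + 1) * S := ⟨_, rfl⟩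
  have hPZ : ((P:ℕ):ℤ) = (1+(M:ℤ))*(S:ℤ) := by rw [hPdef]; push_cast; ring
  obtain ⟨n, hndef⟩ : ∃ n : ℕ, n = 2 * P + 1 := ⟨_, rfl⟩
  set κ : (Fin 3 →₀ ℕ) → ℕ := fun d' => (wt3 M d' + (P:ℤ)).toNat with hκdef
  have hbound : ∀ d' ∈ f.support, (0 ≤ wt3 M d' + (P:ℤ)) ∧ (wt3 M d' + (P:ℤ)) ≤ 2 * (P:ℤ) := by
    intro d' hd'
    have h1 := hS d' hd'
    have hd0 : (d' 0 : ℤ) ≤ S := by exact_mod_cast Nat.le_of_lt_succ (by omega)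
    have hd1 : (d' 1 : ℤ) ≤ S := by exact_mod_cast Nat.le_of_lt_succ (by omega)
    have hd2 : (d' 2 : ℤ) ≤ S := by exact_mod_cast Nat.le_of_lt_succ (by omega)
    have hn0 : (0:ℤ) ≤ d' 0 := Int.natCast_nonneg _
    have hn1 : (0:ℤ) ≤ d' 1 := Int.natCast_nonneg _
    have hn2 : (0:ℤ) ≤ d' 2 := Int.natCast_nonneg _
    have hM0 : (0:ℤ) ≤ (M:ℤ) := Int.natCast_nonneg _
    constructor
    · have hmul : (1+(M:ℤ)) * (d' 2) ≤ (1+(M:ℤ)) * S :=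
        mul_le_mul_of_nonneg_left hd2 (by linarith)
      have hMd1 : (0:ℤ) ≤ (M:ℤ) * (d' 1) := mul_nonneg hM0 hn1
      simp only [wt3]
      rw [hPZ]
      linarith
    · have hmul : (M:ℤ) * (d' 1) ≤ (M:ℤ) * S := mul_le_mul_of_nonneg_left hd1 hM0
      have hMd2 : (0:ℤ) ≤ (1+(M:ℤ)) * (d' 2) := mul_nonneg (by linarith) hn2
      simp only [wt3]
      rw [hPZ]
      linarith
  have hlt : ∀ d' ∈ f.support, κ d' < n := by
    intro d' hd'
    obtain ⟨hb1, hb2⟩ := hbound d' hd'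
    simp only [hκdef]; rw [hndef]
    omega
  set v' : ℕ → R3 := fun k =>
    ∑ d' ∈ f.support.filter (fun d' => κ d' = k), monomial d' (coeff d' f) with hv'def
  -- step 1 : per-element membership
  have hstep1 : ∀ j : Fin n, (∑ k : Fin n, (((j:ℕ):ℂ)+1) ^ (k : ℕ) • v' (k:ℕ)) ∈ I := by
    intro j
    have hjne : (((j:ℕ):ℂ)+1) ≠ 0 := by
      have : (((j:ℕ):ℂ)+1) = (((j:ℕ)+1 : ℕ) : ℂ) := by push_cast; ring
      rw [this]; exact Nat.cast_ne_zero.2 (Nat.succ_ne_zero _)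
    set u : ℂˣ := Units.mk0 _ hjne with hudef
    set t : Fin 3 → ℂ := fun i => ((u ^ (![1, (M:ℤ), -(1+(M:ℤ))] i) : ℂˣ) : ℂ) with htdef
    have ht1 : ∀ i, t i ≠ 0 := fun i => Units.ne_zero _
    have ht2 : t 0 * t 1 * t 2 = 1 := by
      simp only [htdef, Matrix.cons_val_zero, Matrix.cons_val_one, Matrix.head_cons,
        Matrix.cons_val_two, Matrix.tail_cons]
      rw [← Units.val_mul, ← Units.val_mul, ← zpow_add, ← zpow_add,
        show (1:ℤ) + (M:ℤ) + -(1+(M:ℤ)) = 0 by ring, zpow_zero, Units.val_one]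
    have hI1 := hinv t ht1 ht2 f hf
    have hI2 : C ((u ^ ((P:ℕ):ℤ) : ℂˣ) : ℂ) * aeval (fun i : Fin 3 => C (t i) * X i) f ∈ I :=
      I.mul_mem_left _ hI1
    rw [act_lemma, Finset.mul_sum] at hI2
    have hterm : ∀ d' ∈ f.support,
        C ((u ^ ((P:ℕ):ℤ) : ℂˣ) : ℂ) * ((∏ i : Fin 3, t i ^ d' i) • monomial d' (coeff d' f))
          = (((j:ℕ):ℂ)+1) ^ (κ d') • monomial d' (coeff d' f) := by
      intro d' hd'
      have hpr : (∏ i : Fin 3, t i ^ d' i) = ((u ^ (wt3 M d') : ℂˣ) : ℂ) := by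
        rw [htdef]; exact prod_pow_eq u M d'
      rw [hpr, smul_eq_C_mul, smul_eq_C_mul, ← mul_assoc, ← C_mul, ← Units.val_mul, ← zpow_add]
      have hnn := (hbound d' hd').1
      have hexp : ((P:ℕ):ℤ) + wt3 M d' = ((κ d' : ℕ) : ℤ) := by simp only [hκdef]; omega
      rw [hexp, zpow_natCast, Units.val_pow_eq_pow_val, hudef, Units.val_mk0]
    rw [Finset.sum_congr rfl hterm] at hI2
    have hregroup : (∑ d' ∈ f.support, (((j:ℕ):ℂ)+1) ^ (κ d') • monomial d' (coeff d' f))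
        = ∑ k ∈ range n, (((j:ℕ):ℂ)+1) ^ k • v' k := by
      simp only [hv'def, Finset.smul_sum]
      rw [← Finset.sum_fiberwise_of_maps_to (g := κ) (t := range n)
        (fun d' hd' => Finset.mem_range.2 (hlt d' hd'))
        (fun d' => (((j:ℕ):ℂ)+1) ^ (κ d') • monomial d' (coeff d' f))]
      refine Finset.sum_congr rfl fun k _ => Finset.sum_congr rfl fun d' hd' => ?_
      rw [(Finset.mem_filter.1 hd').2]
    rw [hregroup, Finset.sum_range
      (fun k => (((j:ℕ):ℂ)+1) ^ k • v' k)] at hI2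
    exact hI2
  -- step 2 : Vandermonde
  have hxinj : Function.Injective (fun j : Fin n => (((j:ℕ):ℂ)+1)) := by
    intro a1 a2 hab
    simp only [add_left_inj, Nat.cast_inj] at hab
    exact Fin.val_injective hab
  have hv'mem : ∀ k : Fin n, v' (k:ℕ) ∈ I := by
    intro k
    have := vdm_aux (Submodule.restrictScalars ℂ I) n _ hxinj
      (fun k : Fin n => v' (k:ℕ)) (fun j => hstep1 j) k
    exact this
  have hκdn : κ d < n := hlt d hd
  have hvd : v' (κ d) ∈ I := hv'mem ⟨κ d, hκdn⟩
  -- step 3 : series form in the class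
  set c : ℕ → ℂ := fun k => coeff (b + k • triple3) f with hcdef
  have hv'eq : v' (κ d)
      = ∑ k ∈ range (S+1), C (c k) * (monomial b 1 * (X 0 * X 1 * X 2 : R3) ^ k) := by
    simp only [hv'def]
    have hmk : ∀ k : ℕ, C (c k) * (monomial b 1 * (X 0 * X 1 * X 2 : R3) ^ k)
        = monomial (b + k • triple3) (c k) := fun k => (mono_btk b k (c k)).symm
    simp only [hmk]
    have hfilt : f.support.filter (fun d' => κ d' = κ d)
        = f.support.filter (fun d' => wt3 M d' = wt3 M d) := by
      refine Finset.filter_congr fun d' hd' => ?_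
      have h1 := (hbound d' hd').1
      have h2 := (hbound d hd).1
      simp only [hκdef]
      constructor <;> intro h <;> omega
    rw [hfilt]
    rw [← Finset.sum_filter_of_ne (s := range (S+1))
      (p := fun k => b + k • triple3 ∈ f.support)
      (f := fun k => monomial (b + k • triple3) (c k))
      (fun k _ hne => by
        show b + k • triple3 ∈ f.support
        rw [mem_support_iff]
        intro hc0
        apply hne
        show monomial (b + k • triple3) (c k) = 0
        have hck : c k = 0 := by rw [hcdef]; exact hc0
        rw [hck, map_zero])]
    refine Finset.sum_bij' (i := fun d' _ => d' 2 + t0 - d 2)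
      (j := fun k _ => b + k • triple3) ?_ ?_ ?_ ?_ ?_
    · intro d' hd'
      obtain ⟨hd's, hd'w⟩ := Finset.mem_filter.1 hd'
      have hcl := hclass d' hd's hd'w
      have hsum := hS d' hd's
      have h0 := congrArg (fun g : Fin 3 →₀ ℕ => g 0) hcl
      simp only [Finsupp.add_apply, Finsupp.smul_apply, triple3_apply, smul_eq_mul, mul_one] at h0
      refine Finset.mem_filter.2 ⟨Finset.mem_range.2 ?_,
        show b + (d' 2 + t0 - d 2) • triple3 ∈ f.support from ?_⟩
      · show d' 2 + t0 - d 2 < S + 1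
        omega
      · rw [← hcl]; exact hd's
    · intro k hk
      obtain ⟨_, hksupp⟩ := Finset.mem_filter.1 hk
      exact Finset.mem_filter.2 ⟨hksupp, hwtb k⟩
    · intro d' hd'
      obtain ⟨hd's, hd'w⟩ := Finset.mem_filter.1 hd'
      exact (hclass d' hd's hd'w).symm
    · intro k hk
      show (b + k • triple3) 2 + t0 - d 2 = k
      have hbk2 : (b + k • triple3) 2 = b 2 + k := by
        rw [Finsupp.add_apply, Finsupp.smul_apply, triple3_apply, smul_eq_mul, mul_one]
      rw [hbk2, hb_apply]
      omega
    · intro d' hd'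
      obtain ⟨hd's, hd'w⟩ := Finset.mem_filter.1 hd'
      have hcl := hclass d' hd's hd'w
      show monomial d' (coeff d' f) = monomial (b + (d' 2 + t0 - d 2) • triple3) (c (d' 2 + t0 - d 2))
      simp only [hcdef]
      rw [← hcl]
  rw [hv'eq] at hvd
  have hbig : ∀ k, N ≤ k → monomial b 1 * (X 0 * X 1 * X 2 : R3) ^ k ∈ I := by
    intro k hk
    have := mono_btk b k 1
    rw [C_1, one_mul] at this
    rw [← this]
    apply hN
    rw [Finsupp.add_apply, Finsupp.add_apply, Finsupp.add_apply,
      Finsupp.smul_apply, Finsupp.smul_apply, Finsupp.smul_apply,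
      triple3_apply, triple3_apply, triple3_apply]
    simp only [smul_eq_mul, mul_one]
    omega
  have hr : ∀ k, S + 1 ≤ k → c k = 0 := by
    intro k hk
    rw [hcdef]
    by_contra hc0
    have hmem : b + k • triple3 ∈ f.support := mem_support_iff.2 hc0
    have := hS _ hmem
    rw [Finsupp.add_apply, Finsupp.add_apply, Finsupp.add_apply,
      Finsupp.smul_apply, Finsupp.smul_apply, Finsupp.smul_apply,
      triple3_apply, triple3_apply, triple3_apply] at this
    simp only [smul_eq_mul, mul_one] at this
    omega
  have hct0 : c t0 ≠ 0 := by
    rw [hcdef]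
    simp only [hbd]
    exact mem_support_iff.1 hd
  have hfin := low_lemma I (monomial b 1) (X 0 * X 1 * X 2 : R3) c (S+1) N hbig hr hvd t0 hct0
  have := mono_btk b t0 (1:ℂ)
  rw [C_1, one_mul, hbd] at this
  rw [this]
  exact hfin
end

section
/- Let A = ℂ[X,Y,Z] and let I ⊆ A be a monomial ideal. Let w = (w₁,w₂,w₃) ∈ ℕ³ be a triple of nonnegative integers. Let φ : I → A/I be an A-module homomorphism that is homogeneous of multidegree w, i.e. for every monomial X^aY^bZ^c ∈ I, the element φ(X^aY^bZ^c) lies in the ℂ-linear span of the residue class of X^{a+w₁}Y^{b+w₂}Z^{c+w₃} in A/I. Then φ = 0. -/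
open MvPolynomial

/-- Let `A = ℂ[X,Y,Z]`, `I ⊆ A` a monomial ideal, `w ∈ ℕ³`, and
`φ : I → A/I` an `A`-module homomorphism homogeneous of multidegree `w` (each monomial
`X^aY^bZ^c ∈ I` is sent into the line spanned by the class of `X^{a+w₁}Y^{b+w₂}Z^{c+w₃}`).
Then `φ = 0`. -/
theorem stmt_9 (I : Ideal (MvPolynomial (Fin 3) ℂ))
    (hmono : ∀ f ∈ I, ∀ d ∈ f.support, (monomial d (1 : ℂ)) ∈ I)
    (w₁ w₂ w₃ : ℕ)
    (φ : I →ₗ[MvPolynomial (Fin 3) ℂ] (MvPolynomial (Fin 3) ℂ ⧸ I))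
    (hhom : ∀ a b c : ℕ, ∀ hm : X 0 ^ a * X 1 ^ b * X 2 ^ c ∈ I,
      ∃ e : ℂ, φ ⟨X 0 ^ a * X 1 ^ b * X 2 ^ c, hm⟩
        = Submodule.Quotient.mk
            (C e * X 0 ^ (a + w₁) * X 1 ^ (b + w₂) * X 2 ^ (c + w₃))) :
    φ = 0 := by
  have key : ∀ (d : Fin 3 →₀ ℕ) (h : (monomial d (1:ℂ)) ∈ I),
      φ ⟨monomial d 1, h⟩ = 0 := by
    intro d h
    have hrep : (monomial d (1:ℂ)) = X 0 ^ d 0 * X 1 ^ d 1 * X 2 ^ d 2 := by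
      rw [monomial_eq]
      rw [Finsupp.prod_fintype]
      · simp [Fin.prod_univ_three]
      · intro i; simp
    have hm : X 0 ^ d 0 * X 1 ^ d 1 * X 2 ^ d 2 ∈ I := hrep ▸ h
    obtain ⟨e, he⟩ := hhom (d 0) (d 1) (d 2) hm
    have heq : φ ⟨monomial d 1, h⟩ = φ ⟨X 0 ^ d 0 * X 1 ^ d 1 * X 2 ^ d 2, hm⟩ := by
      congr 1; exact Subtype.ext hrep
    rw [heq, he]
    have hmem : C e * X 0 ^ (d 0 + w₁) * X 1 ^ (d 1 + w₂) * X 2 ^ (d 2 + w₃) ∈ I := by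
      have hfac : (C e * X 0 ^ (d 0 + w₁) * X 1 ^ (d 1 + w₂) * X 2 ^ (d 2 + w₃)
            : MvPolynomial (Fin 3) ℂ)
          = (C e * X 0 ^ w₁ * X 1 ^ w₂ * X 2 ^ w₃)
            * (X 0 ^ d 0 * X 1 ^ d 1 * X 2 ^ d 2) := by ring
      rw [hfac]
      exact Ideal.mul_mem_left I _ hm
    exact (Submodule.Quotient.mk_eq_zero I).mpr hmem
  ext ⟨f, hf⟩
  have hx : (⟨f, hf⟩ : I) = ∑ d ∈ f.support.attach,
      (C (f.coeff d) : MvPolynomial (Fin 3) ℂ) • ⟨monomial d 1, hmono f hf d d.2⟩ := by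
    apply Subtype.ext
    simp only [Submodule.coe_sum, SetLike.val_smul, smul_eq_mul, C_mul_monomial, mul_one]
    rw [Finset.sum_attach f.support fun d => monomial d (f.coeff d)]
    exact (f.support_sum_monomial_coeff).symm
  rw [LinearMap.zero_apply, hx, map_sum]
  refine Finset.sum_eq_zero fun d _ => ?_
  rw [map_smul, key, smul_zero]
end

section
/- Let A = ℂ[X,Y,Z] and let I ⊆ A be a monomial ideal such that A/I is a finite-dimensional ℂ-vector space. Let w = (w₁,w₂,w₃) ∈ ℤ³ with w₁ < 0, w₂ < 0, and w₃ < 0. Let φ : I → A/I be an A-module homomorphism that is homogeneous of multidegree w, i.e. for every monomial X^aY^bZ^c ∈ I: if a+w₁ ≥ 0, b+w₂ ≥ 0 and c+w₃ ≥ 0 then φ(X^aY^bZ^c) lies in the ℂ-linear span of the residue class of X^{a+w₁}Y^{b+w₂}Z^{c+w₃} in A/I, and otherwise φ(X^aY^bZ^c) = 0. Then φ = 0. -/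
set_option maxHeartbeats 1000000


open MvPolynomial

private lemma Xpow_mem' (I : Ideal (MvPolynomial (Fin 3) ℂ))
    (hmono : ∀ f ∈ I, ∀ d ∈ f.support, (monomial d (1 : ℂ)) ∈ I)
    [FiniteDimensional ℂ (MvPolynomial (Fin 3) ℂ ⧸ I)] :
    ∃ N : ℕ, (X 0 ^ N : MvPolynomial (Fin 3) ℂ) ∈ I := by
  by_contra h
  push_neg at h
  have lin : LinearIndependent ℂ (fun n : ℕ =>
      (Submodule.Quotient.mk (X 0 ^ n : MvPolynomial (Fin 3) ℂ) : MvPolynomial (Fin 3) ℂ ⧸ I)) := by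
    rw [linearIndependent_iff']
    intro s g hg i hi
    by_contra hgi
    set f : MvPolynomial (Fin 3) ℂ := ∑ j ∈ s, C (g j) * X 0 ^ j with hf
    have hmk : (Submodule.Quotient.mk f : MvPolynomial (Fin 3) ℂ ⧸ I)
        = ∑ j ∈ s, g j • Submodule.Quotient.mk (X 0 ^ j) := by
      rw [hf, show (Submodule.Quotient.mk : MvPolynomial (Fin 3) ℂ →
          MvPolynomial (Fin 3) ℂ ⧸ I) = I.mkQ from rfl, map_sum]
      refine Finset.sum_congr rfl fun j _ => ?_
      rw [← smul_eq_C_mul]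
      exact Submodule.Quotient.mk_smul I (g j) (X 0 ^ j)
    have hfI : f ∈ I := by
      rw [← Submodule.Quotient.mk_eq_zero I, hmk, hg]
    have hcoeff : coeff (Finsupp.single 0 i) f = g i := by
      rw [hf, coeff_sum]
      rw [Finset.sum_eq_single i]
      · simp [coeff_C_mul, X_pow_eq_monomial, coeff_monomial]
      · intro j hj hji
        have hne : (Finsupp.single (0 : Fin 3) j) ≠ Finsupp.single 0 i :=
          fun hEq => hji (Finsupp.single_injective 0 hEq)
        simp [coeff_C_mul, X_pow_eq_monomial, coeff_monomial, hne]
      · intro hs; exact absurd hi hs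
    have hsupp : Finsupp.single 0 i ∈ f.support := by
      rw [mem_support_iff, hcoeff]; exact hgi
    have := hmono f hfI _ hsupp
    rw [← X_pow_eq_monomial] at this
    exact h i this
  exact Module.Finite.not_linearIndependent_of_infinite _ lin

private lemma mono_eq' (d : Fin 3 →₀ ℕ) :
    (monomial d (1:ℂ)) = X 0 ^ (d 0) * X 1 ^ (d 1) * X 2 ^ (d 2) := by
  have hd : d = Finsupp.single 0 (d 0) + Finsupp.single 1 (d 1) + Finsupp.single 2 (d 2) := by
    ext i; fin_cases i <;> simp [Finsupp.single_apply]
  rw [hd]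
  simp [X_pow_eq_monomial, monomial_mul]

/-- Let `A = ℂ[X,Y,Z]`, `I ⊆ A` a monomial ideal with `A/I` finite-dimensional
over `ℂ`, and `w ∈ ℤ³` with all three components negative. If `φ : I → A/I` is an `A`-module
homomorphism homogeneous of multidegree `w` (a monomial `X^aY^bZ^c ∈ I` is sent into the line
spanned by the class of `X^{a+w₁}Y^{b+w₂}Z^{c+w₃}` when all shifted exponents are nonnegative,
and to `0` otherwise), then `φ = 0`. -/
theorem stmt_10 (I : Ideal (MvPolynomial (Fin 3) ℂ))
    (hmono : ∀ f ∈ I, ∀ d ∈ f.support, (monomial d (1 : ℂ)) ∈ I)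
    [FiniteDimensional ℂ (MvPolynomial (Fin 3) ℂ ⧸ I)]
    (w₁ w₂ w₃ : ℤ) (hw₁ : w₁ < 0) (hw₂ : w₂ < 0) (hw₃ : w₃ < 0)
    (φ : I →ₗ[MvPolynomial (Fin 3) ℂ] (MvPolynomial (Fin 3) ℂ ⧸ I))
    (hhom : ∀ a b c : ℕ, ∀ hm : X 0 ^ a * X 1 ^ b * X 2 ^ c ∈ I,
      if 0 ≤ (a : ℤ) + w₁ ∧ 0 ≤ (b : ℤ) + w₂ ∧ 0 ≤ (c : ℤ) + w₃ then
        ∃ e : ℂ, φ ⟨X 0 ^ a * X 1 ^ b * X 2 ^ c, hm⟩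
          = Submodule.Quotient.mk
              (C e * X 0 ^ ((a : ℤ) + w₁).toNat * X 1 ^ ((b : ℤ) + w₂).toNat
                * X 2 ^ ((c : ℤ) + w₃).toNat)
      else φ ⟨X 0 ^ a * X 1 ^ b * X 2 ^ c, hm⟩ = 0) :
    φ = 0 := by
  classical
  -- transporting φ along multiplication
  have smul_phi : ∀ (x m1 m2 : MvPolynomial (Fin 3) ℂ) (h1 : m1 ∈ I) (h2 : m2 ∈ I),
      x * m1 = m2 → φ ⟨m2, h2⟩ = x • φ ⟨m1, h1⟩ := by
    intro x m1 m2 h1 h2 hx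
    have : (⟨m2, h2⟩ : I) = x • (⟨m1, h1⟩ : I) := Subtype.ext (by
      show m2 = x * m1
      exact hx.symm)
    rw [this, map_smul]
  have q_smul : ∀ (x z : MvPolynomial (Fin 3) ℂ),
      x • (Submodule.Quotient.mk z : MvPolynomial (Fin 3) ℂ ⧸ I)
        = Submodule.Quotient.mk (x * z) :=
    fun x z => (Submodule.Quotient.mk_smul I x z).symm
  -- φ vanishes on monomials
  have key : ∀ b a c : ℕ, ∀ hm : X 0 ^ a * X 1 ^ b * X 2 ^ c ∈ I,
      φ ⟨X 0 ^ a * X 1 ^ b * X 2 ^ c, hm⟩ = 0 := by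
    by_contra hk
    push_neg at hk
    obtain ⟨b0, a0, c0, hm0, hne0⟩ := hk
    have hexP : ∃ b, ∃ a c : ℕ, ∃ hm : X 0 ^ a * X 1 ^ b * X 2 ^ c ∈ I,
        φ ⟨X 0 ^ a * X 1 ^ b * X 2 ^ c, hm⟩ ≠ 0 := ⟨b0, a0, c0, hm0, hne0⟩
    obtain ⟨a, c, hm, hφ⟩ := Nat.find_spec hexP
    set b := Nat.find hexP with hbdef
    have hmin : ∀ b' < b, ¬ ∃ a c : ℕ, ∃ hm : X 0 ^ a * X 1 ^ b' * X 2 ^ c ∈ I,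
        φ ⟨X 0 ^ a * X 1 ^ b' * X 2 ^ c, hm⟩ ≠ 0 := fun b' hb' => Nat.find_min hexP hb'
    have hh := hhom a b c hm
    by_cases hcond : 0 ≤ (a : ℤ) + w₁ ∧ 0 ≤ (b : ℤ) + w₂ ∧ 0 ≤ (c : ℤ) + w₃
    · rw [if_pos hcond] at hh
      obtain ⟨e, he⟩ := hh
      obtain ⟨h1, h2, h3⟩ := hcond
      set a' := ((a : ℤ) + w₁).toNat with ha'
      set b' := ((b : ℤ) + w₂).toNat with hb'
      set c' := ((c : ℤ) + w₃).toNat with hc'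
      set p := (-w₁).toNat with hp
      set q := (-w₂).toNat with hq
      set r := (-w₃).toNat with hr
      have hap : a = a' + p := by omega
      have hbq : b = b' + q := by omega
      have hcr : c = c' + r := by omega
      have hp1 : 1 ≤ p := by omega
      have hq1 : 1 ≤ q := by omega
      have hr1 : 1 ≤ r := by omega
      -- rewrite he with grouping
      have he2 : φ ⟨X 0 ^ a * X 1 ^ b * X 2 ^ c, hm⟩
          = Submodule.Quotient.mk (C e * (X 0 ^ a' * X 1 ^ b' * X 2 ^ c')) := by
        rw [he]; congr 1; ring
      have heC : e ≠ 0 := by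
        intro h0
        apply hφ
        rw [he2, h0, map_zero, zero_mul, Submodule.Quotient.mk_eq_zero]
        exact I.zero_mem
      have hCu : C e * (X 0 ^ a' * X 1 ^ b' * X 2 ^ c') ∉ I := by
        intro hmem
        apply hφ
        rw [he2, Submodule.Quotient.mk_eq_zero]
        exact hmem
      -- b = b1 + 1
      obtain ⟨b1, hb1⟩ : ∃ b1, b = b1 + 1 := ⟨b - 1, by omega⟩
      have hYnot : (X 0 ^ a * X 1 ^ b1 * X 2 ^ c : MvPolynomial (Fin 3) ℂ) ∉ I := by
        intro hY
        refine hmin b1 (by omega) ⟨a, c, hY, ?_⟩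
        intro h0
        apply hφ
        have hid : (X 1 * (X 0 ^ a * X 1 ^ b1 * X 2 ^ c) : MvPolynomial (Fin 3) ℂ) = X 0 ^ a * X 1 ^ b * X 2 ^ c := by
          rw [hb1]; ring
        rw [smul_phi (X 1) _ _ hY hm hid, h0, smul_zero]
      have hXp : (X 0 ^ a * X 1 ^ b' * X 2 ^ c' : MvPolynomial (Fin 3) ℂ) ∉ I := by
        intro hmem
        apply hYnot
        have hid : ((X 1 ^ (b1 - b') * X 2 ^ (c - c')) * (X 0 ^ a * X 1 ^ b' * X 2 ^ c')
            : MvPolynomial (Fin 3) ℂ) = X 0 ^ a * X 1 ^ b1 * X 2 ^ c := by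
          have e1 : b' + (b1 - b') = b1 := by omega
          have e2 : c' + (c - c') = c := by omega
          calc ((X 1 ^ (b1 - b') * X 2 ^ (c - c')) * (X 0 ^ a * X 1 ^ b' * X 2 ^ c')
              : MvPolynomial (Fin 3) ℂ)
              = X 0 ^ a * X 1 ^ (b' + (b1 - b')) * X 2 ^ (c' + (c - c')) := by ring
            _ = X 0 ^ a * X 1 ^ b1 * X 2 ^ c := by rw [e1, e2]
        rw [← hid]
        exact Ideal.mul_mem_left _ _ hmem
      -- find minimal k with X^(a'+k) Y^b' Z^c' ∈ I
      obtain ⟨N, hN⟩ := Xpow_mem' I hmono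
      have hexQ : ∃ k : ℕ, (X 0 ^ (a' + k) * X 1 ^ b' * X 2 ^ c' : MvPolynomial (Fin 3) ℂ) ∈ I := by
        refine ⟨N, ?_⟩
        have hid : (X 0 ^ (a' + N) * X 1 ^ b' * X 2 ^ c' : MvPolynomial (Fin 3) ℂ)
            = (X 0 ^ a' * X 1 ^ b' * X 2 ^ c') * X 0 ^ N := by ring
        rw [hid]
        exact Ideal.mul_mem_left _ _ hN
      set k := Nat.find hexQ with hkdef
      have hnI := Nat.find_spec hexQ
      have hkp : p + 1 ≤ k := by
        by_contra hlt
        push_neg at hlt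
        apply hXp
        have hid : (X 0 ^ a * X 1 ^ b' * X 2 ^ c' : MvPolynomial (Fin 3) ℂ)
            = X 0 ^ (p - k) * (X 0 ^ (a' + k) * X 1 ^ b' * X 2 ^ c') := by
          have : a = (a' + k) + (p - k) := by omega
          rw [this]; ring
        rw [hid]
        exact Ideal.mul_mem_left _ _ hnI
      obtain ⟨k1, hk1⟩ : ∃ k1, k = k1 + 1 := ⟨k - 1, by omega⟩
      have hnX : (X 0 ^ (a' + k1) * X 1 ^ b' * X 2 ^ c' : MvPolynomial (Fin 3) ℂ) ∉ I :=
        Nat.find_min hexQ (by omega)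
      -- L := X^(a'+k) Y^b Z^c
      have hL : (X 0 ^ (a' + k) * X 1 ^ b * X 2 ^ c : MvPolynomial (Fin 3) ℂ) ∈ I := by
        have hid : (X 0 ^ (a' + k) * X 1 ^ b * X 2 ^ c : MvPolynomial (Fin 3) ℂ)
            = X 0 ^ (k - p) * (X 0 ^ a * X 1 ^ b * X 2 ^ c) := by
          have : a' + k = (k - p) + a := by omega
          rw [this]; ring
        rw [hid]
        exact Ideal.mul_mem_left _ _ hm
      have hφL : φ ⟨X 0 ^ (a' + k) * X 1 ^ b * X 2 ^ c, hL⟩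
          = Submodule.Quotient.mk (C e * (X 0 ^ (a' + (k - p)) * X 1 ^ b' * X 2 ^ c')) := by
        rw [smul_phi (X 0 ^ (k - p)) _ _ hm hL (by
          have : a' + k = (k - p) + a := by omega
          rw [this]; ring)]
        rw [he2, q_smul]
        congr 1
        ring
      have huNot : (X 0 ^ (a' + (k - p)) * X 1 ^ b' * X 2 ^ c' : MvPolynomial (Fin 3) ℂ) ∉ I := by
        intro hmem
        apply hnX
        have hid : (X 0 ^ (a' + k1) * X 1 ^ b' * X 2 ^ c' : MvPolynomial (Fin 3) ℂ)
            = X 0 ^ (p - 1) * (X 0 ^ (a' + (k - p)) * X 1 ^ b' * X 2 ^ c') := by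
          have : a' + k1 = (p - 1) + (a' + (k - p)) := by omega
          rw [this]; ring
        rw [hid]
        exact Ideal.mul_mem_left _ _ hmem
      have hφL_ne : φ ⟨X 0 ^ (a' + k) * X 1 ^ b * X 2 ^ c, hL⟩ ≠ 0 := by
        rw [hφL, Ne, Submodule.Quotient.mk_eq_zero]
        intro hmem
        apply huNot
        have hid : (X 0 ^ (a' + (k - p)) * X 1 ^ b' * X 2 ^ c' : MvPolynomial (Fin 3) ℂ)
            = C e⁻¹ * (C e * (X 0 ^ (a' + (k - p)) * X 1 ^ b' * X 2 ^ c')) := by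
          rw [← mul_assoc, ← C_mul, inv_mul_cancel₀ heC, C_1, one_mul]
        rw [hid]
        exact Ideal.mul_mem_left _ _ hmem
      -- conclude
      have hrel : φ ⟨X 0 ^ (a' + k) * X 1 ^ b * X 2 ^ c, hL⟩
          = (X 1 ^ (b - b') * X 2 ^ (c - c') : MvPolynomial (Fin 3) ℂ) • φ ⟨X 0 ^ (a' + k) * X 1 ^ b' * X 2 ^ c', hnI⟩ := by
        refine smul_phi _ _ _ hnI hL ?_
        have e1 : b' + (b - b') = b := by omega
        have e2 : c' + (c - c') = c := by omega
        calc ((X 1 ^ (b - b') * X 2 ^ (c - c')) * (X 0 ^ (a' + k) * X 1 ^ b' * X 2 ^ c')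
            : MvPolynomial (Fin 3) ℂ)
            = X 0 ^ (a' + k) * X 1 ^ (b' + (b - b')) * X 2 ^ (c' + (c - c')) := by ring
          _ = X 0 ^ (a' + k) * X 1 ^ b * X 2 ^ c := by rw [e1, e2]
      have hφn : φ ⟨X 0 ^ (a' + k) * X 1 ^ b' * X 2 ^ c', hnI⟩ ≠ 0 := by
        intro h0
        exact hφL_ne (by rw [hrel, h0, smul_zero])
      exact hmin b' (by omega) ⟨a' + k, c', hnI, hφn⟩
    · rw [if_neg hcond] at hh
      exact hφ hh
  -- from monomials to all of I
  ext ⟨f, hf⟩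
  rw [LinearMap.zero_apply]
  have hdecomp : (⟨f, hf⟩ : I) = ∑ d ∈ f.support.attach,
      (C (f.coeff d) : MvPolynomial (Fin 3) ℂ) • (⟨monomial d 1, hmono f hf d d.2⟩ : I) := by
    apply Subtype.ext
    push_cast
    simp only [smul_eq_mul, C_mul_monomial, mul_one]
    conv_lhs => rw [f.as_sum]
    rw [← Finset.sum_attach f.support fun d => monomial d (f.coeff d)]
  rw [hdecomp, map_sum]
  refine Finset.sum_eq_zero fun d _ => ?_
  rw [map_smul]
  have h2 : (X 0 ^ (d.1 0) * X 1 ^ (d.1 1) * X 2 ^ (d.1 2) : MvPolynomial (Fin 3) ℂ) ∈ I :=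
    mono_eq' d.1 ▸ hmono f hf d.1 d.2
  rw [show (⟨monomial d.1 1, hmono f hf d.1 d.2⟩ : I)
      = ⟨X 0 ^ (d.1 0) * X 1 ^ (d.1 1) * X 2 ^ (d.1 2), h2⟩ from Subtype.ext (mono_eq' d.1)]
  rw [key _ _ _ h2, smul_zero]
end
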